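/- arXiv:1106.1399 — 2 statements merged into one kernel-verified Lean document; each statement's English description precedes it below -/
import Mathlib

section
/- Let 2 ≤ i ≤ n and let V′ ⊆ W_{i−1,2n−i} = span(w_1,…,w_{i−1},w_{2n−i+1},…,w_{2n}) be an isotropic subspace of dimension i−1, where V′^⊥ = {w ∈ W : ⟨w, v⟩ = 0 for all v ∈ V′}. Then the quotient (V′^⊥ ∩ W_{i,2n−i})/V′ is 2-dimensional, and the map sending V to its image in this quotient is a bijection from the set {V ⊆ W : V′ ⊆ V ⊆ W_{i,2n−i}, dim V = i, V isotropic} onto the set of 1-dimensional subspaces of (V′^⊥ ∩ W_{i,2n−i})/V′. -/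
noncomputable section

/-- The ambient 2n-dimensional complex vector space `W = ℂ^{2n}`. -/
abbrev Wsp (n : ℕ) := Fin (2*n) → ℂ

/-- The basis vector `w_k` (1-based index `k ∈ {1,…,2n}`). -/
def wvec (n k : ℕ) : Wsp n := fun i => if (i : ℕ) + 1 = k then 1 else 0

/-- The standard symplectic form: `⟨w_i, w_{2n+1-i}⟩ = 1` for `1 ≤ i ≤ n`,
and `⟨w_i, w_j⟩ = 0` for `j ≠ 2n+1-i`. -/
def sform (n : ℕ) (x y : Wsp n) : ℂ :=
  ∑ i : Fin (2*n), (if (i : ℕ) < n then 1 else -1) * x i *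
    y ⟨2*n - 1 - (i : ℕ), by have := i.isLt; omega⟩

/-- A subspace is isotropic if the symplectic form vanishes on it. -/
def IsIsotropic (n : ℕ) (U : Submodule ℂ (Wsp n)) : Prop :=
  ∀ u ∈ U, ∀ v ∈ U, sform n u v = 0

/-- The projection `pr_k` along `w_k` (1-based). -/
def prj (n k : ℕ) : Wsp n →ₗ[ℂ] Wsp n where
  toFun x := fun i => if (i : ℕ) + 1 = k then 0 else x i
  map_add' x y := by funext i; by_cases h : (i : ℕ) + 1 = k <;> simp [h]
  map_smul' c x := by funext i; by_cases h : (i : ℕ) + 1 = k <;> simp [h]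

/-- The subspace `W_{i,j} = span(w_1,…,w_i,w_{j+1},…,w_{2n})` (1-based). -/
def WIJ (n i j : ℕ) : Submodule ℂ (Wsp n) :=
  Submodule.span ℂ (wvec n '' {k | (1 ≤ k ∧ k ≤ i) ∨ (j + 1 ≤ k ∧ k ≤ 2*n)})

/-- Orthogonal complement with respect to the symplectic form. -/
def sperp (n : ℕ) (U : Submodule ℂ (Wsp n)) : Submodule ℂ (Wsp n) where
  carrier := {x | ∀ u ∈ U, sform n x u = 0}
  zero_mem' := by intro u hu; simp [sform]
  add_mem' := by
    intro a b ha hb u hu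
    have ha' := ha u hu
    have hb' := hb u hu
    simp only [sform, Pi.add_apply, add_mul, mul_add, Finset.sum_add_distrib] at *
    rw [ha', hb', add_zero]
  smul_mem' := by
    intro c a ha u hu
    have ha' := ha u hu
    simp only [sform, Pi.smul_apply, smul_eq_mul] at *
    calc ∑ i : Fin (2*n), (if (i : ℕ) < n then 1 else -1) * (c * a i) *
          u ⟨2*n - 1 - (i : ℕ), by have := i.isLt; omega⟩
        = c * ∑ i : Fin (2*n), (if (i : ℕ) < n then 1 else -1) * a i *
          u ⟨2*n - 1 - (i : ℕ), by have := i.isLt; omega⟩ := by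
          rw [Finset.mul_sum]; congr 1; funext i; ring
      _ = 0 := by rw [ha', mul_zero]

/-- The points of the Bott–Samelson type resolution `SpR_{2n}`:
collections `(V_{i,j})` for `1 ≤ i ≤ j`, `i+j ≤ 2n`. -/
structure IsSpR (n : ℕ) (V : ℕ → ℕ → Submodule ℂ (Wsp n)) : Prop where
  dim : ∀ i j, 1 ≤ i → i ≤ j → i + j ≤ 2*n → Module.finrank ℂ (V i j) = i
  sub : ∀ i j, 1 ≤ i → i ≤ j → i + j ≤ 2*n → V i j ≤ WIJ n i j
  mono : ∀ i j, 1 ≤ i → i + 1 ≤ j → (i + 1) + j ≤ 2*n → V i j ≤ V (i+1) j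
  proj : ∀ i j, 1 ≤ i → i ≤ j → i + (j+1) ≤ 2*n →
    Submodule.map (prj n (j+1)) (V i j) ≤ V i (j+1)
  isot : ∀ i, 1 ≤ i → i ≤ n → IsIsotropic n (V i (2*n - i))

/-- A point of `SpR_{2n}` lies in the divisor `Z_{i,j}` if
`V_{i,j} = V_{i-1,j+1} + ℂ w_{j+1}` (with `V_0 = 0`). -/
def InZ (n : ℕ) (V : ℕ → ℕ → Submodule ℂ (Wsp n)) (i j : ℕ) : Prop :=
  V i j = (if i = 1 then ⊥ else V (i-1) (j+1)) ⊔ Submodule.span ℂ {wvec n (j+1)}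

-- experiments
def sB (n : ℕ) : LinearMap.BilinForm ℂ (Wsp n) :=
  LinearMap.mk₂ ℂ (sform n)
    (fun x x' y => by
      simp only [sform, Pi.add_apply]
      rw [← Finset.sum_add_distrib]; congr 1; funext i; ring)
    (fun c x y => by
      simp only [sform, Pi.smul_apply, smul_eq_mul]
      rw [Finset.mul_sum]; congr 1; funext i; ring)
    (fun x y y' => by
      simp only [sform, Pi.add_apply]
      rw [← Finset.sum_add_distrib]; congr 1; funext i; ring)
    (fun c x y => by
      simp only [sform, Pi.smul_apply, smul_eq_mul]
      rw [Finset.mul_sum]; congr 1; funext i; ring)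

@[simp] lemma sB_apply (n : ℕ) (x y : Wsp n) : sB n x y = sform n x y := rfl

lemma sform_skew (n : ℕ) (x y : Wsp n) : sform n x y = - sform n y x := by
  unfold sform
  rw [← Finset.sum_neg_distrib]
  apply Fintype.sum_equiv (Equiv.mk (fun i : Fin (2*n) => (⟨2*n-1-(i:ℕ), by omega⟩ : Fin (2*n)))
    (fun i : Fin (2*n) => ⟨2*n-1-(i:ℕ), by omega⟩) (fun i => by ext; simp; omega)
    (fun i => by ext; simp; omega))
  intro i
  simp only [Equiv.coe_fn_mk]
  have h1 : 2*n-1-(2*n-1-(i:ℕ)) = (i:ℕ) := by omega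
  by_cases h : (i:ℕ) < n
  · have h2 : ¬ (2*n-1-(i:ℕ) < n) := by omega
    simp [h, h2, h1]; ring_nf
  · have h2 : (2*n-1-(i:ℕ) < n) := by have := i.isLt; omega
    simp [h, h2, h1]; ring_nf

lemma sform_self (n : ℕ) (x : Wsp n) : sform n x x = 0 := by
  have := sform_skew n x x; linear_combination this / 2

lemma sB_isRefl (n : ℕ) : (sB n).IsRefl := by
  intro x y h; simp only [sB_apply] at *; rw [sform_skew, h, neg_zero]

lemma sform_wvec_right (n k : ℕ) (hk1 : 1 ≤ k) (hk2 : k ≤ 2*n) (x : Wsp n) :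
    sform n x (wvec n k) =
      (if 2*n - k < n then 1 else -1) * x ⟨2*n - k, by omega⟩ := by
  unfold sform wvec
  rw [Finset.sum_eq_single (⟨2*n - k, by omega⟩ : Fin (2*n))]
  · have h2 : 2*n - 1 - (2*n - k) + 1 = k := by omega
    simp [h2]
  · intro i _ hne
    have : ¬ (2*n - 1 - (i:ℕ) + 1 = k) := by
      intro h
      apply hne; ext; simp; have := i.isLt; omega
    simp [this]
  · intro h; exact absurd (Finset.mem_univ _) h

lemma sB_nondeg (n : ℕ) : (sB n).Nondegenerate := by
  apply LinearMap.BilinForm.Nondegenerate.ofSeparatingLeft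
  intro x hx
  funext j
  have h := hx (wvec n (2*n - (j:ℕ)))
  rw [sB_apply, sform_wvec_right n _ (by have := j.isLt; omega) (by omega)] at h
  have e : (⟨2*n - (2*n - (j:ℕ)), by have := j.isLt; omega⟩ : Fin (2*n)) = j := by
    ext; have := j.isLt; simp; omega
  rw [e] at h
  show x j = 0
  by_cases hc : 2*n - (2*n - (j:ℕ)) < n
  · simpa [hc] using h
  · have h2 := h; simp only [hc, if_false, neg_one_mul, neg_eq_zero] at h2; exact h2

lemma sperp_eq_orthogonal (n : ℕ) (U : Submodule ℂ (Wsp n)) :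
    sperp n U = (sB n).orthogonal U := by
  ext x
  constructor
  · intro hx u hu; exact (sB_isRefl n) x u (hx u hu)
  · intro hx u hu; exact (sB_isRefl n) u x (hx u hu)

/-- Coordinate subspace: functions supported on `{j | j+1 ∈ S}`. -/
def coordSub (n : ℕ) (S : Set ℕ) : Submodule ℂ (Wsp n) where
  carrier := {x | ∀ j : Fin (2*n), (j:ℕ)+1 ∉ S → x j = 0}
  zero_mem' := fun j _ => rfl
  add_mem' := fun ha hb j hj => by
    show _ + _ = (0:ℂ); rw [ha j hj, hb j hj, add_zero]
  smul_mem' := fun c x hx j hj => by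
    show c * _ = (0:ℂ); rw [hx j hj, mul_zero]

lemma mem_coordSub (n : ℕ) (S : Set ℕ) (x : Wsp n) :
    x ∈ coordSub n S ↔ ∀ j : Fin (2*n), (j:ℕ)+1 ∉ S → x j = 0 := Iff.rfl

lemma span_wvec_eq_coordSub (n : ℕ) (S : Set ℕ) :
    Submodule.span ℂ (wvec n '' S) = coordSub n S := by
  classical
  apply le_antisymm
  · rw [Submodule.span_le]
    rintro _ ⟨k, hk, rfl⟩ j hj
    show (if (j:ℕ)+1 = k then (1:ℂ) else 0) = 0
    rw [if_neg]; intro h; exact hj (h ▸ hk)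
  · intro x hx
    have hrep : x = ∑ j ∈ Finset.univ.filter (fun j : Fin (2*n) => (j:ℕ)+1 ∈ S),
        x j • wvec n ((j:ℕ)+1) := by
      funext i
      rw [Finset.sum_apply]
      by_cases hi : (i:ℕ)+1 ∈ S
      · rw [Finset.sum_eq_single i]
        · simp [wvec]
        · intro b _ hb
          have hne : ¬((i:ℕ)+1 = (b:ℕ)+1) := by
            intro h; exact hb (Fin.ext (by omega)).symm
          simp [wvec, hne, show (i:ℕ) ≠ b by omega]
        · intro h; simp [hi] at h
      · rw [hx i hi, Finset.sum_eq_zero]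
        intro b hb
        simp only [Finset.mem_filter] at hb
        have hne : ¬((i:ℕ)+1 = (b:ℕ)+1) := by
          intro h; exact hi (h ▸ hb.2)
        simp [wvec, hne, show (i:ℕ) ≠ b by omega]
    rw [hrep]
    apply Submodule.sum_mem
    intro j hj
    simp only [Finset.mem_filter] at hj
    exact Submodule.smul_mem _ _ (Submodule.subset_span ⟨(j:ℕ)+1, hj.2, rfl⟩)

lemma WIJ_eq_coordSub (n i j : ℕ) :
    WIJ n i j = coordSub n {k | (1 ≤ k ∧ k ≤ i) ∨ (j + 1 ≤ k ∧ k ≤ 2*n)} :=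
  span_wvec_eq_coordSub n _

lemma WIJ_mono (n j : ℕ) {i i' : ℕ} (h : i ≤ i') : WIJ n i j ≤ WIJ n i' j := by
  apply Submodule.span_mono
  apply Set.image_mono
  intro k hk
  rcases hk with h1 | h2
  · exact Or.inl ⟨h1.1, h1.2.trans h⟩
  · exact Or.inr h2

lemma wvec_eq_single (n : ℕ) (j : Fin (2*n)) : wvec n ((j:ℕ)+1) = Pi.single j 1 := by
  funext i
  show (if (i:ℕ)+1 = (j:ℕ)+1 then (1:ℂ) else 0) = _
  by_cases h : i = j
  · subst h; simp
  · have hne : ¬((i:ℕ)+1 = (j:ℕ)+1) := fun hc => h (Fin.ext (by omega))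
    rw [if_neg hne, Pi.single_apply, if_neg h]

/-- The index family for `WIJ n i (2*n - i)`. -/
def wijFam (n i : ℕ) (hi : 1 ≤ i) (hin : i ≤ n) : Fin i ⊕ Fin i → Fin (2*n) :=
  fun a => match a with
  | Sum.inl a => ⟨(a:ℕ), by have := a.isLt; omega⟩
  | Sum.inr a => ⟨2*n - i + (a:ℕ), by have := a.isLt; omega⟩

lemma wijFam_inj (n i : ℕ) (hi : 1 ≤ i) (hin : i ≤ n) :
    Function.Injective (wijFam n i hi hin) := by
  rintro (a | a) (b | b) h <;> simp only [wijFam, Fin.mk.injEq] at h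
  · exact congrArg Sum.inl (Fin.ext h)
  · have := a.isLt; have := b.isLt; omega
  · have := a.isLt; have := b.isLt; omega
  · exact congrArg Sum.inr (Fin.ext (by have := a.isLt; have := b.isLt; omega))

set_option maxHeartbeats 1000000 in
lemma finrank_WIJ (n i : ℕ) (hi : 1 ≤ i) (hin : i ≤ n) :
    Module.finrank ℂ (WIJ n i (2*n - i)) = 2 * i := by
  have hli : LinearIndependent ℂ
      (fun a => wvec n ((wijFam n i hi hin a : ℕ) + 1)) := by
    have h1 : (fun a => wvec n ((wijFam n i hi hin a : ℕ) + 1)) =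
        (fun j : Fin (2*n) => Pi.single j (1:ℂ)) ∘ wijFam n i hi hin := by
      funext a; exact wvec_eq_single n _
    have h2 : (fun j : Fin (2*n) => Pi.single j (1:ℂ)) = ⇑(Pi.basisFun ℂ (Fin (2*n))) := by
      funext j; rw [Pi.basisFun_apply]
    rw [h1, h2]
    exact (Pi.basisFun ℂ (Fin (2*n))).linearIndependent.comp _ (wijFam_inj n i hi hin)
  have hrange : Set.range (fun a => wvec n ((wijFam n i hi hin a : ℕ) + 1)) =
      wvec n '' {k | (1 ≤ k ∧ k ≤ i) ∨ ((2*n - i) + 1 ≤ k ∧ k ≤ 2*n)} := by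
    ext y
    constructor
    · rintro ⟨a, rfl⟩
      rcases a with a | a
      · exact ⟨(a:ℕ)+1, Or.inl ⟨by omega, by have := a.isLt; omega⟩, rfl⟩
      · exact ⟨2*n - i + (a:ℕ) + 1, Or.inr ⟨by omega, by have := a.isLt; omega⟩, rfl⟩
    · rintro ⟨k, hk, rfl⟩
      rcases hk with ⟨hk1, hk2⟩ | ⟨hk1, hk2⟩
      · refine ⟨Sum.inl ⟨k - 1, by omega⟩, ?_⟩
        show wvec n (k - 1 + 1) = wvec n k
        rw [show k - 1 + 1 = k by omega]
      · refine ⟨Sum.inr ⟨k - 1 - (2*n - i), by omega⟩, ?_⟩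
        show wvec n (2*n - i + (k - 1 - (2*n - i)) + 1) = wvec n k
        rw [show 2*n - i + (k - 1 - (2*n - i)) + 1 = k by omega]
  unfold WIJ
  rw [← hrange, finrank_span_eq_card hli]
  simp [Fintype.card_sum]; ring

lemma mem_orthogonal_span (n : ℕ) (s : Set (Wsp n)) (x : Wsp n) :
    x ∈ (sB n).orthogonal (Submodule.span ℂ s) ↔ ∀ u ∈ s, sform n u x = 0 := by
  constructor
  · intro h u hu; exact h u (Submodule.subset_span hu)
  · intro h u hu
    induction hu using Submodule.span_induction with
    | mem u hu => exact h u hu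
    | zero => show sB n 0 x = 0; rw [map_zero]; rfl
    | add u v _ _ hu hv =>
        show sB n (u + v) x = 0
        rw [map_add, LinearMap.add_apply]
        rw [show sB n u x = 0 from hu, show sB n v x = 0 from hv, add_zero]
    | smul c u _ hu =>
        show sB n (c • u) x = 0
        rw [map_smul, LinearMap.smul_apply, show sB n u x = 0 from hu, smul_zero]

lemma pm_mul_eq_zero {c : Prop} [Decidable c] {a : ℂ}
    (h : (if c then (1:ℂ) else -1) * a = 0) : a = 0 := by
  by_cases hc : c
  · rw [if_pos hc, one_mul] at h; exact h
  · rw [if_neg hc, neg_one_mul, neg_eq_zero] at h; exact h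

lemma orthogonal_WIJ (n i : ℕ) (hi : 1 ≤ i) (hin : i ≤ n) :
    (sB n).orthogonal (WIJ n i (2*n - i)) =
      coordSub n {k | i + 1 ≤ k ∧ k ≤ 2*n - i} := by
  ext x
  rw [WIJ, mem_orthogonal_span, mem_coordSub]
  constructor
  · intro h j hj
    have hjlt := j.isLt
    have hj' : ¬(i + 1 ≤ (j:ℕ)+1 ∧ (j:ℕ)+1 ≤ 2*n - i) := hj
    have hmem : (1 ≤ 2*n - (j:ℕ) ∧ 2*n - (j:ℕ) ≤ i) ∨
        ((2*n - i) + 1 ≤ 2*n - (j:ℕ) ∧ 2*n - (j:ℕ) ≤ 2*n) := by omega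
    have h1 := h (wvec n (2*n - (j:ℕ))) ⟨2*n - (j:ℕ), hmem, rfl⟩
    rw [sform_skew, sform_wvec_right n _ (by omega) (by omega), neg_eq_zero] at h1
    have e : (⟨2*n - (2*n - (j:ℕ)), by omega⟩ : Fin (2*n)) = j := by
      ext; simp; omega
    rw [e] at h1
    exact pm_mul_eq_zero h1
  · rintro h _ ⟨k, hk, rfl⟩
    have hk' : (1 ≤ k ∧ k ≤ i) ∨ ((2*n - i) + 1 ≤ k ∧ k ≤ 2*n) := hk
    rw [sform_skew, sform_wvec_right n _ (by omega) (by omega), neg_eq_zero]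
    have hz : x ⟨2*n - k, by omega⟩ = 0 := by
      apply h
      show ¬(i + 1 ≤ (2*n - k) + 1 ∧ (2*n - k) + 1 ≤ 2*n - i)
      omega
    rw [hz, mul_zero]

lemma finrank_Wsp (n : ℕ) : Module.finrank ℂ (Wsp n) = 2*n :=
  Module.finrank_fin_fun ℂ

set_option synthInstance.maxHeartbeats 400000 in
lemma finrank_map_mkQ_add (n : ℕ) (V' P : Submodule ℂ (Wsp n)) (h : V' ≤ P) :
    Module.finrank ℂ (Submodule.map V'.mkQ P) + Module.finrank ℂ V'
      = Module.finrank ℂ P := by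
  have h1 := LinearMap.finrank_range_add_finrank_ker (V'.mkQ.domRestrict P)
  rw [LinearMap.range_domRestrict, LinearMap.ker_domRestrict, Submodule.ker_mkQ] at h1
  have he : Module.finrank ℂ ↥(Submodule.comap P.subtype V') = Module.finrank ℂ ↥V' :=
    (Submodule.comapSubtypeEquivOfLe h).finrank_eq
  rw [he] at h1
  exact h1

lemma sup_sperp_WIJ (n i : ℕ) (hi2 : 2 ≤ i) (hin : i ≤ n)
    (V' : Submodule ℂ (Wsp n)) (hV'sub : V' ≤ WIJ n (i - 1) (2*n - i)) :
    sperp n V' ⊔ WIJ n i (2*n - i) = ⊤ := by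
  have horth : (sB n).orthogonal (sperp n V' ⊔ WIJ n i (2*n - i)) = ⊥ := by
    rw [eq_bot_iff]
    intro x hx
    have hx1 : x ∈ (sB n).orthogonal (sperp n V') :=
      LinearMap.BilinForm.orthogonal_le le_sup_left hx
    have hx2 : x ∈ (sB n).orthogonal (WIJ n i (2*n - i)) :=
      LinearMap.BilinForm.orthogonal_le le_sup_right hx
    rw [sperp_eq_orthogonal,
      LinearMap.BilinForm.orthogonal_orthogonal (sB_nondeg n) (sB_isRefl n)] at hx1
    rw [orthogonal_WIJ n i (by omega) hin] at hx2
    have hx1' := hV'sub hx1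
    rw [WIJ_eq_coordSub, mem_coordSub] at hx1'
    rw [mem_coordSub] at hx2
    have : x = 0 := by
      funext j
      have hjlt := j.isLt
      by_cases hc : i - 1 ≤ (j:ℕ) ∧ (j:ℕ) < 2*n - i
      · apply hx1'
        show ¬((1 ≤ (j:ℕ)+1 ∧ (j:ℕ)+1 ≤ i - 1) ∨ ((2*n - i) + 1 ≤ (j:ℕ)+1 ∧ (j:ℕ)+1 ≤ 2*n))
        omega
      · apply hx2
        show ¬(i + 1 ≤ (j:ℕ)+1 ∧ (j:ℕ)+1 ≤ 2*n - i)
        omega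
    simp [this]
  have hrank := LinearMap.BilinForm.finrank_add_finrank_orthogonal (B := sB n)
    (sB_isRefl n) (sperp n V' ⊔ WIJ n i (2*n - i))
  rw [horth, LinearMap.BilinForm.orthogonal_top_eq_bot (sB_nondeg n),
    inf_bot_eq, finrank_bot, add_zero, add_zero] at hrank
  exact Submodule.eq_top_of_finrank_eq (by rw [hrank])

lemma finrank_inf_sperp_WIJ (n i : ℕ) (hi2 : 2 ≤ i) (hin : i ≤ n)
    (V' : Submodule ℂ (Wsp n)) (hV'sub : V' ≤ WIJ n (i - 1) (2*n - i))
    (hV'dim : Module.finrank ℂ V' = i - 1) :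
    Module.finrank ℂ (sperp n V' ⊓ WIJ n i (2*n - i) : Submodule ℂ (Wsp n)) = i + 1 := by
  have hperp : Module.finrank ℂ (sperp n V') = 2*n - (i - 1) := by
    rw [sperp_eq_orthogonal,
      LinearMap.BilinForm.finrank_orthogonal (sB_nondeg n), hV'dim, finrank_Wsp]
  have hW := finrank_WIJ n i (by omega) hin
  have hsum := Submodule.finrank_sup_add_finrank_inf_eq (sperp n V') (WIJ n i (2*n - i))
  rw [sup_sperp_WIJ n i hi2 hin V' hV'sub, finrank_top, finrank_Wsp, hperp, hW] at hsum
  omega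

lemma isotropic_of_le_sperp (n : ℕ) (V' V : Submodule ℂ (Wsp n))
    (hV'iso : IsIsotropic n V') (hle : V' ≤ V) (hsp : V ≤ sperp n V')
    (hdim : Module.finrank ℂ V = Module.finrank ℂ V' + 1) :
    IsIsotropic n V := by
  have hne : ¬ (V ≤ V') := by
    intro hVV'
    have := Submodule.finrank_mono hVV'
    omega
  obtain ⟨x, hxV, hxV'⟩ := SetLike.not_le_iff_exists.mp hne
  have hx0 : x ≠ 0 := fun h => hxV' (h ▸ V'.zero_mem)
  have hinf : V' ⊓ Submodule.span ℂ {x} = ⊥ := by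
    rw [eq_bot_iff]
    intro y hy
    obtain ⟨c, rfl⟩ := Submodule.mem_span_singleton.mp hy.2
    rcases eq_or_ne c 0 with rfl | hc
    · simp
    · exact absurd (by simpa [smul_smul, inv_mul_cancel₀ hc] using V'.smul_mem c⁻¹ hy.1) hxV'
  have hle2 : V' ⊔ Submodule.span ℂ {x} ≤ V :=
    sup_le hle ((Submodule.span_singleton_le_iff_mem x V).mpr hxV)
  have hranks := Submodule.finrank_sup_add_finrank_inf_eq V' (Submodule.span ℂ {x})
  rw [hinf, finrank_bot, add_zero, finrank_span_singleton hx0] at hranks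
  have hVeq : V' ⊔ Submodule.span ℂ {x} = V :=
    Submodule.eq_of_le_of_finrank_le hle2 (by omega)
  intro u hu v hv
  rw [← hVeq] at hu hv
  obtain ⟨a, ha, z, hz, rfl⟩ := Submodule.mem_sup.mp hu
  obtain ⟨b, hb, z', hz', rfl⟩ := Submodule.mem_sup.mp hv
  obtain ⟨c, rfl⟩ := Submodule.mem_span_singleton.mp hz
  obtain ⟨d, rfl⟩ := Submodule.mem_span_singleton.mp hz'
  have expand : sform n (a + c • x) (b + d • x)
      = sform n a b + d * sform n a x + c * sform n x b + c * (d * sform n x x) := by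
    show sB n (a + c • x) (b + d • x) = _
    simp only [map_add, map_smul, LinearMap.add_apply, LinearMap.smul_apply, smul_eq_mul,
      sB_apply]
    ring
  have hxsp : x ∈ sperp n V' := hsp hxV
  rw [expand, hV'iso a ha b hb, hxsp b hb, sform_self,
    show sform n a x = 0 by rw [sform_skew, hxsp a ha, neg_zero]]
  ring

theorem statement2 (n i : ℕ) (hn : 1 ≤ n) (hi2 : 2 ≤ i) (hin : i ≤ n)
    (V' : Submodule ℂ (Wsp n)) (hV'sub : V' ≤ WIJ n (i - 1) (2*n - i))
    (hV'dim : Module.finrank ℂ V' = i - 1) (hV'iso : IsIsotropic n V') :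
    Module.finrank ℂ
        (Submodule.map V'.mkQ (sperp n V' ⊓ WIJ n i (2*n - i))) = 2 ∧
      Set.BijOn (fun V : Submodule ℂ (Wsp n) => Submodule.map V'.mkQ V)
        {V | V' ≤ V ∧ V ≤ WIJ n i (2*n - i) ∧ Module.finrank ℂ V = i ∧ IsIsotropic n V}
        {L | L ≤ Submodule.map V'.mkQ (sperp n V' ⊓ WIJ n i (2*n - i)) ∧
          Module.finrank ℂ L = 1} := by
  have hV'W : V' ≤ WIJ n i (2*n - i) := hV'sub.trans (WIJ_mono n _ (by omega))
  have hV'sp : V' ≤ sperp n V' := fun v hv u hu => hV'iso v hv u hu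
  have hV'inf : V' ≤ sperp n V' ⊓ WIJ n i (2*n - i) := le_inf hV'sp hV'W
  have hinf_rank := finrank_inf_sperp_WIJ n i hi2 hin V' hV'sub hV'dim
  have hQ : Module.finrank ℂ
      (Submodule.map V'.mkQ (sperp n V' ⊓ WIJ n i (2*n - i))) = 2 := by
    have h := finrank_map_mkQ_add n V' _ hV'inf
    rw [hinf_rank, hV'dim] at h
    omega
  refine ⟨hQ, ?_, ?_, ?_⟩
  · -- MapsTo
    rintro V ⟨h1, h2, h3, h4⟩
    have hVsp : V ≤ sperp n V' := fun x hx u hu => h4 x hx u (h1 hu)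
    refine ⟨Submodule.map_mono (le_inf hVsp h2), ?_⟩
    have h := finrank_map_mkQ_add n V' V h1
    rw [h3, hV'dim] at h
    show Module.finrank ℂ ↥(Submodule.map V'.mkQ V) = 1
    omega
  · -- InjOn
    rintro V₁ ⟨h1, _, _, _⟩ V₂ ⟨h1', _, _, _⟩ heq
    have hcomap : Submodule.comap V'.mkQ (Submodule.map V'.mkQ V₁)
        = Submodule.comap V'.mkQ (Submodule.map V'.mkQ V₂) := by
      simp only at heq; rw [heq]
    rwa [Submodule.comap_map_eq, Submodule.comap_map_eq, Submodule.ker_mkQ,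
      sup_eq_left.mpr h1, sup_eq_left.mpr h1'] at hcomap
  · -- SurjOn
    rintro L ⟨hL1, hL2⟩
    set V : Submodule ℂ (Wsp n) :=
      (sperp n V' ⊓ WIJ n i (2*n - i)) ⊓ Submodule.comap V'.mkQ L with hVdef
    have hmapV : Submodule.map V'.mkQ V = L := by
      apply le_antisymm
      · exact (Submodule.map_mono inf_le_right).trans (Submodule.map_comap_le _ _)
      · intro l hl
        obtain ⟨x, hx, rfl⟩ := hL1 hl
        exact ⟨x, ⟨hx, hl⟩, rfl⟩
    have hV'V : V' ≤ V := by
      refine le_inf hV'inf (fun v hv => ?_)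
      show V'.mkQ v ∈ L
      rw [show V'.mkQ v = 0 from (Submodule.Quotient.mk_eq_zero V').2 hv]
      exact L.zero_mem
    have hrankV : Module.finrank ℂ V = i := by
      have h := finrank_map_mkQ_add n V' V hV'V
      rw [hmapV, hL2, hV'dim] at h
      omega
    refine ⟨V, ⟨hV'V, inf_le_left.trans inf_le_right, hrankV, ?_⟩, hmapV⟩
    exact isotropic_of_le_sperp n V' V hV'iso hV'V (inf_le_left.trans inf_le_left)
      (by rw [hrankV, hV'dim]; omega)

end
end

section
/- Let (V_{i,j}) be a point of SpR_{2n}. Then the following are equivalent: (a) for every index pair (i,j) (1 ≤ i ≤ j, i+j ≤ 2n), the collection does not lie in Z_{i,j}, i.e. V_{i,j} ≠ V_{i−1,j+1} + ℂw_{j+1}; (b) for every index pair (i,j), V_{i,j} ∩ span(w_{j+1},…,w_{2n}) = 0 (equivalently, the Plücker coordinate p_{1,…,i} of V_{i,j} is nonzero). -/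
noncomputable section

-- basic coordinate lemmas
lemma wvec_apply (n k : ℕ) (m : Fin (2*n)) :
    wvec n k m = if (m : ℕ) + 1 = k then 1 else 0 := rfl

lemma wvec_ne_zero {n k : ℕ} (h1 : 1 ≤ k) (h2 : k ≤ 2*n) : wvec n k ≠ 0 := by
  intro h
  have h3 : (1 : ℂ) = 0 := by
    have := congrFun h ⟨k-1, by omega⟩
    simp [wvec_apply, Nat.sub_add_cancel h1] at this
  exact one_ne_zero h3

lemma mem_WIJ {n : ℕ} (a b : ℕ) (x : Wsp n) :
    x ∈ WIJ n a b ↔ ∀ m : Fin (2*n), a ≤ (m : ℕ) → (m : ℕ) < b → x m = 0 := by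
  constructor
  · intro hx
    induction hx using Submodule.span_induction with
    | mem y hy =>
      obtain ⟨k, hk, rfl⟩ := hy
      intro m h1 h2
      rw [wvec_apply, if_neg]
      simp only [Set.mem_setOf_eq] at hk
      omega
    | zero => intro m _ _; rfl
    | add y z _ _ hy hz => intro m h1 h2; simp [Pi.add_apply, hy m h1 h2, hz m h1 h2]
    | smul c y _ hy => intro m h1 h2; simp [Pi.smul_apply, hy m h1 h2]
  · intro h
    have hx : x = ∑ m : Fin (2*n), x m • wvec n ((m : ℕ) + 1) := by
      have h1 : ∀ m : Fin (2*n), x m • wvec n ((m : ℕ) + 1) = Pi.single m (x m) := by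
        intro m
        funext i
        rw [Pi.smul_apply, wvec_apply, Pi.single_apply]
        by_cases hi : i = m
        · subst hi; simp
        · rw [if_neg (by intro hc; exact hi (Fin.ext (by omega))), if_neg hi]
          simp
      rw [funext h1, Finset.univ_sum_single]
    rw [hx]
    apply Submodule.sum_mem
    intro m _
    by_cases hm : a ≤ (m : ℕ) ∧ (m : ℕ) < b
    · rw [h m hm.1 hm.2, zero_smul]; exact Submodule.zero_mem _
    · exact Submodule.smul_mem _ _ (Submodule.subset_span ⟨(m : ℕ)+1, by
        simp only [Set.mem_setOf_eq]; have := m.isLt; omega, rfl⟩)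

lemma prj_apply (n k : ℕ) (x : Wsp n) (m : Fin (2*n)) :
    prj n k x m = if (m : ℕ) + 1 = k then 0 else x m := rfl

lemma prj_decomp {n j : ℕ} (hj : j < 2*n) (x : Wsp n) :
    x = prj n (j+1) x + x ⟨j, hj⟩ • wvec n (j+1) := by
  funext m
  rw [Pi.add_apply, prj_apply, Pi.smul_apply, wvec_apply]
  by_cases hm : (m : ℕ) + 1 = j + 1
  · have : m = ⟨j, hj⟩ := Fin.ext (show (m:ℕ) = j by omega)
    subst this
    simp [hm]
  · simp [hm, show (m:ℕ) ≠ j by omega]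

lemma mem_of_eq_smul {n : ℕ} {M : Submodule ℂ (Wsp n)} {x w : Wsp n} {c : ℂ}
    (hx : x ∈ M) (h : x = c • w) (hx0 : x ≠ 0) : w ∈ M := by
  have hc : c ≠ 0 := by rintro rfl; rw [zero_smul] at h; exact hx0 h
  have hw : w = c⁻¹ • x := by rw [h, smul_smul, inv_mul_cancel₀ hc, one_smul]
  rw [hw]; exact M.smul_mem _ hx
lemma stepB {n : ℕ} (V : ℕ → ℕ → Submodule ℂ (Wsp n)) (hV : IsSpR n V)
    (i j : ℕ) (h1 : 1 ≤ i) (h2 : i ≤ j) (h3 : i + j ≤ 2*n)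
    (hw : wvec n (j+1) ∈ V i j)
    (hP : 2 ≤ i → V (i-1) j ⊓ WIJ n 0 j = ⊥) :
    InZ n V i j := by
  have hjn : j < 2*n := by omega
  have hw0 : wvec n (j+1) ≠ 0 := wvec_ne_zero (by omega) (by omega)
  have hdim : Module.finrank ℂ (V i j) = i := hV.dim i j h1 h2 h3
  by_cases hi1 : i = 1
  · subst hi1
    have hle : Submodule.span ℂ {wvec n (j+1)} ≤ V 1 j :=
      (Submodule.span_singleton_le_iff_mem _ _).mpr hw
    have heq : Submodule.span ℂ {wvec n (j+1)} = V 1 j :=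
      Submodule.eq_of_le_of_finrank_le hle (by rw [hdim, finrank_span_singleton hw0])
    rw [InZ, if_pos rfl, bot_sup_eq, heq]
  · -- i ≥ 2
    have hi2 : 2 ≤ i := by omega
    have hPb := hP hi2
    have hA : V (i-1) j ≤ V i j := by
      have := hV.mono (i-1) j (by omega) (by omega) (by omega)
      have he : i - 1 + 1 = i := by omega
      rwa [he] at this
    have hdimA : Module.finrank ℂ (V (i-1) j) = i - 1 :=
      hV.dim (i-1) j (by omega) (by omega) (by omega)
    have hinfA : V (i-1) j ⊓ Submodule.span ℂ {wvec n (j+1)} = ⊥ := by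
      rw [eq_bot_iff]
      intro y hy
      refine (eq_bot_iff.mp hPb) ?_
      refine Submodule.mem_inf.mpr ⟨hy.1, ?_⟩
      obtain ⟨c, hc⟩ := Submodule.mem_span_singleton.mp hy.2
      rw [← hc]
      refine Submodule.smul_mem _ _ ?_
      rw [mem_WIJ]
      intro m _ hm
      rw [wvec_apply, if_neg (by omega)]
    -- V i j = V(i-1)j ⊔ span w
    have hsup1 : V (i-1) j ⊔ Submodule.span ℂ {wvec n (j+1)} = V i j := by
      apply Submodule.eq_of_le_of_finrank_le
      · exact sup_le hA ((Submodule.span_singleton_le_iff_mem _ _).mpr hw)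
      · have := Submodule.finrank_sup_add_finrank_inf_eq (V (i-1) j)
          (Submodule.span ℂ {wvec n (j+1)})
        rw [hinfA, hdimA, finrank_span_singleton hw0] at this
        simp only [finrank_bot, add_zero] at this
        rw [hdim]
        omega
    -- A ≤ V(i-1)(j+1) ⊔ span w
    have hmove : V (i-1) j ≤ V (i-1) (j+1) ⊔ Submodule.span ℂ {wvec n (j+1)} := by
      intro a ha
      rw [prj_decomp hjn a]
      refine Submodule.add_mem _ (Submodule.mem_sup_left ?_) (Submodule.mem_sup_right ?_)
      · exact hV.proj (i-1) j (by omega) (by omega) (by omega) ⟨a, ha, rfl⟩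
      · exact Submodule.smul_mem _ _ (Submodule.mem_span_singleton_self _)
    have hfinal : V i j = V (i-1) (j+1) ⊔ Submodule.span ℂ {wvec n (j+1)} := by
      apply Submodule.eq_of_le_of_finrank_le
      · rw [← hsup1]
        exact sup_le hmove le_sup_right
      · have hd2 : Module.finrank ℂ (V (i-1) (j+1)) = i - 1 :=
          hV.dim (i-1) (j+1) (by omega) (by omega) (by omega)
        have := Submodule.finrank_sup_add_finrank_inf_eq (V (i-1) (j+1))
          (Submodule.span ℂ {wvec n (j+1)})
        rw [hd2, finrank_span_singleton hw0] at this
        rw [hdim]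
        omega
    rw [InZ, if_neg hi1]
    exact hfinal
lemma stepA {n : ℕ} (V : ℕ → ℕ → Submodule ℂ (Wsp n)) (hV : IsSpR n V)
    (i j : ℕ) (h1 : 1 ≤ i) (h2 : i ≤ j) (h3 : i + (j+1) ≤ 2*n)
    (hnext : V i (j+1) ⊓ WIJ n 0 (j+1) = ⊥)
    (x : Wsp n) (hxV : x ∈ V i j) (hxW : x ∈ WIJ n 0 j) (hx0 : x ≠ 0) :
    wvec n (j+1) ∈ V i j := by
  have hjn : j < 2*n := by omega
  have hy1 : prj n (j+1) x ∈ V i (j+1) :=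
    hV.proj i j h1 h2 h3 ⟨x, hxV, rfl⟩
  have hy2 : prj n (j+1) x ∈ WIJ n 0 (j+1) := by
    rw [mem_WIJ]
    intro m _ hm
    rw [prj_apply]
    by_cases hmj : (m : ℕ) + 1 = j + 1
    · rw [if_pos hmj]
    · rw [if_neg hmj]
      exact (mem_WIJ 0 j x).mp hxW m (by omega) (by omega)
  have hy0 : prj n (j+1) x = 0 := by
    have := eq_bot_iff.mp hnext (Submodule.mem_inf.mpr ⟨hy1, hy2⟩)
    simpa using this
  have hxe : x = x ⟨j, hjn⟩ • wvec n (j+1) := by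
    have := prj_decomp hjn x
    rw [hy0, zero_add] at this
    exact this
  exact mem_of_eq_smul hxV hxe hx0

lemma stepA' {n : ℕ} (V : ℕ → ℕ → Submodule ℂ (Wsp n)) (hV : IsSpR n V)
    (i : ℕ) (h1 : 1 ≤ i) (h2 : i ≤ 2*n - i) (hn : 1 ≤ n)
    (hP : 2 ≤ i → V (i-1) (2*n-i) ⊓ WIJ n 0 (2*n-i) = ⊥)
    (x : Wsp n) (hxV : x ∈ V i (2*n-i)) (hxW : x ∈ WIJ n 0 (2*n-i)) (hx0 : x ≠ 0) :
    wvec n (2*n-i+1) ∈ V i (2*n-i) := by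
  set j := 2*n - i with hjdef
  have hij : i + j = 2*n := by omega
  have hjn : j < 2*n := by omega
  -- key claim: upper coordinates of x vanish
  have hupper : ∀ m : Fin (2*n), j < (m : ℕ) → x m = 0 := by
    intro m hm
    have hmlt := m.isLt
    have hi2 : 2 ≤ i := by omega
    set t : ℕ := 2*n - 1 - (m : ℕ) with htdef
    have ht : t < i - 1 := by omega
    -- construct v ∈ V (i-1) j with prescribed first coordinates
    have hPb := hP hi2
    have hsurj : ∃ v : Wsp n, v ∈ V (i-1) j ∧
        ∀ r : Fin (2*n), (r : ℕ) < i - 1 → v r = if (r : ℕ) = t then 1 else 0 := by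
      have hilt : i - 1 ≤ 2*n := by omega
      let L : V (i-1) j →ₗ[ℂ] (Fin (i-1) → ℂ) :=
        { toFun := fun v u => (v : Wsp n) ⟨(u : ℕ), by have := u.isLt; omega⟩
          map_add' := fun a b => rfl
          map_smul' := fun c a => rfl }
      have hinj : Function.Injective L := by
        rw [← LinearMap.ker_eq_bot, eq_bot_iff]
        intro v hv
        have hv0 : ∀ u : Fin (i-1), (v : Wsp n) ⟨(u : ℕ), by have := u.isLt; omega⟩ = 0 :=
          fun u => congrFun (LinearMap.mem_ker.mp hv) u
        have hvW : (v : Wsp n) ∈ WIJ n (i-1) j :=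
          hV.sub (i-1) j (by omega) (by omega) (by omega) v.2
        have hvmem : (v : Wsp n) ∈ WIJ n 0 j := by
          rw [mem_WIJ]
          intro m' _ hm'
          by_cases hc : (m' : ℕ) < i - 1
          · have := hv0 ⟨(m' : ℕ), hc⟩
            simpa using this
          · exact (mem_WIJ (i-1) j _).mp hvW m' (by omega) hm'
        have : (v : Wsp n) ∈ (⊥ : Submodule ℂ (Wsp n)) :=
          eq_bot_iff.mp hPb (Submodule.mem_inf.mpr ⟨v.2, hvmem⟩)
        simpa using Subtype.ext (by simpa using this : (v : Wsp n) = 0)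
      have hfr : Module.finrank ℂ (V (i-1) j) = Module.finrank ℂ (Fin (i-1) → ℂ) := by
        rw [hV.dim (i-1) j (by omega) (by omega) (by omega), Module.finrank_fin_fun]
      have hsur : Function.Surjective L :=
        (LinearMap.injective_iff_surjective_of_finrank_eq_finrank hfr).mp hinj
      obtain ⟨v, hv⟩ := hsur (fun u => if (u : ℕ) = t then 1 else 0)
      refine ⟨(v : Wsp n), v.2, ?_⟩
      intro r hr
      have := congrFun hv ⟨(r : ℕ), hr⟩
      exact this
    obtain ⟨v, hvmem, hvcoord⟩ := hsurj
    -- v ∈ V i j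
    have hvV : v ∈ V i j := by
      have := hV.mono (i-1) j (by omega) (by omega) (by omega)
      have he : i - 1 + 1 = i := by omega
      rw [he] at this
      exact this hvmem
    -- isotropy
    have hiso : sform n x v = 0 := by
      have h4 := hV.isot i h1 (by omega)
      rw [← hjdef] at h4
      exact h4 x hxV v hvV
    -- evaluate the sum
    rw [sform] at hiso
    rw [Finset.sum_eq_single m] at hiso
    · -- the single term gives x m = 0
      have hvt : v ⟨2*n - 1 - (m : ℕ), by omega⟩ = 1 := by
        rw [hvcoord ⟨2*n - 1 - (m : ℕ), by omega⟩ (by simpa using ht)]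
        simp [htdef]
      rw [hvt, mul_one, if_neg (by omega : ¬ ((m : ℕ) < n))] at hiso
      have : x m = 0 := by
        have := hiso
        field_simp at this
        exact neg_eq_zero.mp this
      exact this
    · -- other terms vanish
      intro s _ hsm
      by_cases hs1 : (s : ℕ) < j
      · rw [(mem_WIJ 0 j x).mp hxW s (by omega) hs1]
        ring
      · -- s ≥ j, s ≠ m
        have hsm' : (s : ℕ) ≠ (m : ℕ) := fun h => hsm (Fin.ext h)
        by_cases hs2 : (s : ℕ) = j
        · -- v at index i-1 vanishes (from WIJ membership)
          have hvW : v ∈ WIJ n (i-1) j :=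
            hV.sub (i-1) j (by omega) (by omega) (by omega) hvmem
          have : v ⟨2*n - 1 - (s : ℕ), by omega⟩ = 0 :=
            (mem_WIJ (i-1) j v).mp hvW _ (by simp; omega) (by simp; omega)
          rw [this]; ring
        · -- s > j : v coordinate is a prescribed one, ≠ t
          have : v ⟨2*n - 1 - (s : ℕ), by omega⟩ = 0 := by
            rw [hvcoord ⟨2*n - 1 - (s : ℕ), by omega⟩ (by simp; omega)]
            rw [if_neg (by simp; omega)]
          rw [this]; ring
    · intro hm'; exact absurd (Finset.mem_univ m) hm'
  -- now x is a multiple of w_{j+1}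
  have hxe : x = x ⟨j, hjn⟩ • wvec n (j+1) := by
    funext r
    rw [Pi.smul_apply, wvec_apply]
    by_cases hr1 : (r : ℕ) < j
    · rw [(mem_WIJ 0 j x).mp hxW r (by omega) hr1, if_neg (by omega)]
      simp
    · by_cases hr2 : (r : ℕ) = j
      · rw [if_pos (by omega)]
        have : r = ⟨j, hjn⟩ := Fin.ext hr2
        rw [this]
        simp
      · rw [hupper r (by omega), if_neg (by omega)]
        simp
  exact mem_of_eq_smul hxV hxe hx0
lemma keyInd {n : ℕ} (hn : 1 ≤ n) (V : ℕ → ℕ → Submodule ℂ (Wsp n)) (hV : IsSpR n V)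
    (hZ : ∀ i j, 1 ≤ i → i ≤ j → i + j ≤ 2*n → ¬ InZ n V i j) :
    ∀ μ i j, 1 ≤ i → i ≤ j → i + j ≤ 2*n → 4*n*i + (2*n - j) ≤ μ →
      V i j ⊓ WIJ n 0 j = ⊥ := by
  intro μ
  induction μ with
  | zero =>
    intro i j h1 h2 h3 hμ
    exfalso
    have : 4*1*1 ≤ 4*n*i := Nat.mul_le_mul (Nat.mul_le_mul le_rfl hn) h1
    omega
  | succ μ ih =>
    intro i j h1 h2 h3 hμ
    by_contra hne
    obtain ⟨x, hxmem, hx0⟩ := (Submodule.ne_bot_iff _).mp hne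
    obtain ⟨hxV, hxW⟩ := Submodule.mem_inf.mp hxmem
    -- outer IH measure fact
    have hmeas1 : 4*n*(i-1) + 4*n = 4*n*i ∨ i = 1 := by
      by_cases hi1 : i = 1
      · right; exact hi1
      · left
        rw [← Nat.mul_succ]
        congr 1
        omega
    have hP : 2 ≤ i → V (i-1) j ⊓ WIJ n 0 j = ⊥ := by
      intro hi2
      refine ih (i-1) j (by omega) (by omega) (by omega) ?_
      rcases hmeas1 with h | h
      · omega
      · omega
    have hw : wvec n (j+1) ∈ V i j := by
      by_cases hb : i + (j+1) ≤ 2*n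
      · refine stepA V hV i j h1 h2 hb ?_ x hxV hxW hx0
        refine ih i (j+1) h1 (by omega) hb ?_
        have hK : ∀ K, 4*n*i = K → K + (2*n - j) ≤ μ + 1 → K + (2*n - (j+1)) ≤ μ := by
          intro K _ hle
          omega
        exact hK _ rfl hμ
      · have hj : j = 2*n - i := by omega
        subst hj
        exact stepA' V hV i h1 h2 hn hP x hxV hxW hx0
    exact hZ i j h1 h2 h3 (stepB V hV i j h1 h2 h3 hw hP)
theorem statement4 (n : ℕ) (hn : 1 ≤ n)
    (V : ℕ → ℕ → Submodule ℂ (Wsp n)) (hV : IsSpR n V) :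
    (∀ i j, 1 ≤ i → i ≤ j → i + j ≤ 2*n → ¬ InZ n V i j) ↔
    (∀ i j, 1 ≤ i → i ≤ j → i + j ≤ 2*n → V i j ⊓ WIJ n 0 j = ⊥) := by
  constructor
  · intro hZ i j h1 h2 h3
    exact keyInd hn V hV hZ (4*n*i + (2*n - j)) i j h1 h2 h3 le_rfl
  · intro hB i j h1 h2 h3 hInZ
    have hw : wvec n (j+1) ∈ V i j := by
      rw [hInZ]
      exact Submodule.mem_sup_right (Submodule.mem_span_singleton_self _)
    have hwW : wvec n (j+1) ∈ WIJ n 0 j := by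
      rw [mem_WIJ]
      intro m _ hm
      rw [wvec_apply, if_neg (by omega)]
    have hbot : wvec n (j+1) ∈ (⊥ : Submodule ℂ (Wsp n)) := by
      rw [← hB i j h1 h2 h3]
      exact Submodule.mem_inf.mpr ⟨hw, hwW⟩
    exact wvec_ne_zero (n := n) (k := j+1) (by omega) (by omega) (by simpa using hbot)
end
end
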